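/- For every ℓ ∈ ℕ and every k-tree G, there exists a k-tree Ḡ such that every ℓ-local book embedding of Ḡ contains a forest embedding of G, i.e., there is a vertex subset X with Ḡ[X] ≅ G such that the restriction of the embedding to Ḡ[X] has a forest on every page. -/

import Mathlib

open SimpleGraph

/-- Two edges `e₁ = s(a,c)` and `e₂ = s(b,d)` cross with respect to the spine
position function `pos` if `a ≺ b ≺ c ≺ d`. -/
def Crosses {V : Type*} (pos : V → ℕ) (e₁ e₂ : Sym2 V) : Prop :=
  ∃ a b c d : V, e₁ = s(a, c) ∧ e₂ = s(b, d) ∧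
    pos a < pos b ∧ pos b < pos c ∧ pos c < pos d

/-- A linear embedding of `G`: an (injective) spine position function together with
an assignment of edges to pages (indexed by naturals). -/
structure LinearEmbedding {V : Type*} (G : SimpleGraph V) where
  pos : V → ℕ
  inj : Function.Injective pos
  page : Sym2 V → ℕ

namespace LinearEmbedding

variable {V : Type*} {G : SimpleGraph V} (L : LinearEmbedding G)

/-- The set of indices of nonempty pages. -/
def pages : Set ℕ := {i | ∃ e ∈ G.edgeSet, L.page e = i}

/-- The number of (nonempty) pages. -/
noncomputable def pageCount : ℕ := L.pages.ncard

/-- The set of pages having an edge incident to `v`. -/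
def pagesAt (v : V) : Set ℕ := {i | ∃ e ∈ G.edgeSet, v ∈ e ∧ L.page e = i}

/-- The subgraph of `G` formed by the edges on page `i`. -/
def pageGraph (i : ℕ) : SimpleGraph V :=
  fromEdgeSet {e | e ∈ G.edgeSet ∧ L.page e = i}

/-- The set of vertices incident to an edge on page `i`. -/
def pageVerts (i : ℕ) : Set V := {v | ∃ e ∈ G.edgeSet, L.page e = i ∧ v ∈ e}

/-- The set of edges on page `i`. -/
def pageEdges (i : ℕ) : Set (Sym2 V) := {e | e ∈ G.edgeSet ∧ L.page e = i}

/-- A book embedding: no two edges on a common page cross. -/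
def IsBook : Prop :=
  ∀ e₁ ∈ G.edgeSet, ∀ e₂ ∈ G.edgeSet, L.page e₁ = L.page e₂ → ¬ Crosses L.pos e₁ e₂

/-- A `k`-local embedding: every vertex has incident edges on at most `k` pages. -/
noncomputable def IsLocal (k : ℕ) : Prop := ∀ v : V, (L.pagesAt v).ncard ≤ k

/-- A union embedding: any two edges lying on the same page and in the same
connected component of that page do not cross. -/
def IsUnion : Prop :=
  ∀ e₁ ∈ G.edgeSet, ∀ e₂ ∈ G.edgeSet, L.page e₁ = L.page e₂ →
    (∃ u v, u ∈ e₁ ∧ v ∈ e₂ ∧ (L.pageGraph (L.page e₁)).Reachable u v) →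
    ¬ Crosses L.pos e₁ e₂

/-- A forest embedding: the edges of each page form a forest. -/
def IsForestEmbedding : Prop := ∀ i : ℕ, (L.pageGraph i).IsAcyclic

end LinearEmbedding

/-- The (classical) page number of `G`. -/
noncomputable def pn {V : Type*} (G : SimpleGraph V) : ℕ :=
  sInf {k | ∃ L : LinearEmbedding G, L.IsBook ∧ L.pageCount ≤ k}

/-- The local page number of `G`. -/
noncomputable def pnLoc {V : Type*} (G : SimpleGraph V) : ℕ :=
  sInf {k | ∃ L : LinearEmbedding G, L.IsBook ∧ L.IsLocal k}

/-- The union page number of `G`. -/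
noncomputable def pnUnion {V : Type*} (G : SimpleGraph V) : ℕ :=
  sInf {k | ∃ L : LinearEmbedding G, L.IsUnion ∧ L.pageCount ≤ k}

/-- `IsKTree k G s`: the graph `G`, whose edges all lie inside the vertex set `s`,
is a `k`-tree on vertex set `s`. -/
inductive IsKTree {V : Type*} [DecidableEq V] (k : ℕ) : SimpleGraph V → Finset V → Prop
  | base (G : SimpleGraph V) (s : Finset V) (hcard : s.card = k + 1)
      (hadj : ∀ a b, G.Adj a b ↔ (a ∈ s ∧ b ∈ s ∧ a ≠ b)) :
      IsKTree k G s
  | extend (G G' : SimpleGraph V) (s c : Finset V) (v : V)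
      (hG : IsKTree k G s) (hv : v ∉ s) (hc : c ⊆ s) (hcard : c.card = k)
      (hclique : ∀ a ∈ c, ∀ b ∈ c, a ≠ b → G.Adj a b)
      (hG' : ∀ a b, G'.Adj a b ↔
        (G.Adj a b ∨ (a = v ∧ b ∈ c) ∨ (b = v ∧ a ∈ c))) :
      IsKTree k G' (insert v s)

section Part1
variable {V : Type*} {G : SimpleGraph V} (L : LinearEmbedding G)

lemma cross4 (hbook : L.IsBook) {a b e f : V}
    (h1 : L.pos a < L.pos b) (h2 : L.pos b < L.pos e) (h3 : L.pos e < L.pos f)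
    (hae : s(a,e) ∈ G.edgeSet) (hbf : s(b,f) ∈ G.edgeSet)
    (hp : L.page s(a,e) = L.page s(b,f)) : False :=
  hbook _ hae _ hbf hp ⟨a, b, e, f, rfl, rfl, h1, h2, h3⟩

/-- two vertices adjacent to both `c`, `c'` (with `pos c < pos c'`) on a common page
cannot be in "conflicting" positions. -/
lemma pair_conflict (hbook : L.IsBook) {c c' y z : V} {p : ℕ}
    (hcc' : L.pos c < L.pos c')
    (hyz : L.pos y < L.pos z)
    (eyc : s(y,c) ∈ G.edgeSet) (eyc' : s(y,c') ∈ G.edgeSet)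
    (ezc : s(z,c) ∈ G.edgeSet) (ezc' : s(z,c') ∈ G.edgeSet)
    (pyc : L.page s(y,c) = p) (pyc' : L.page s(y,c') = p)
    (pzc : L.page s(z,c) = p) (pzc' : L.page s(z,c') = p)
    (hcase : (L.pos z < L.pos c) ∨ (L.pos c < L.pos y ∧ L.pos z < L.pos c')
      ∨ (L.pos c' < L.pos y) ∨ (L.pos y < L.pos c ∧ L.pos c' < L.pos z)) : False := by
  rcases hcase with h | ⟨h1, h2⟩ | h | ⟨h1, h2⟩
  · -- y < z < c < c' : edges s(y,c), s(z,c')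
    exact cross4 L hbook hyz h hcc' eyc ezc' (pyc.trans pzc'.symm)
  · -- c < y < z < c' : edges s(c,z), s(y,c')
    have ezc2 : s(c,z) ∈ G.edgeSet := by rwa [Sym2.eq_swap]
    have : L.page s(c,z) = L.page s(y,c') := by rw [Sym2.eq_swap]; rw [pzc, pyc']
    exact cross4 L hbook h1 hyz h2 ezc2 eyc' this
  · -- c < c' < y < z : edges s(c,y), s(c',z)
    have e1 : s(c,y) ∈ G.edgeSet := by rwa [Sym2.eq_swap]
    have e2 : s(c',z) ∈ G.edgeSet := by rwa [Sym2.eq_swap]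
    have : L.page s(c,y) = L.page s(c',z) := by
      rw [Sym2.eq_swap (a := c) (b := y), Sym2.eq_swap (a := c') (b := z), pyc, pzc']
    exact cross4 L hbook hcc' h hyz e1 e2 this
  · -- y < c < c' < z : edges s(y,c'), s(c,z)
    have e2 : s(c,z) ∈ G.edgeSet := by rwa [Sym2.eq_swap]
    have : L.page s(y,c') = L.page s(c,z) := by
      rw [pyc', Sym2.eq_swap, pzc]
    exact cross4 L hbook h1 hcc' h2 eyc' e2 this

/-- sorted version: three vertices `a₁ a₂ a₃` with `pos a₁ < pos a₂ < pos a₃`, all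
adjacent to both `c` and `c'` on a common page, with `pos c < pos c'`: contradiction. -/
lemma sorted_K23 (hbook : L.IsBook) {c c' a₁ a₂ a₃ : V} {p : ℕ}
    (hcc' : L.pos c < L.pos c')
    (h12 : L.pos a₁ < L.pos a₂) (h23 : L.pos a₂ < L.pos a₃)
    (hne : ∀ y ∈ [a₁, a₂, a₃], y ≠ c ∧ y ≠ c')
    (he : ∀ y ∈ [a₁, a₂, a₃], s(y,c) ∈ G.edgeSet ∧ s(y,c') ∈ G.edgeSet ∧
      L.page s(y,c) = p ∧ L.page s(y,c') = p) : False := by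
  obtain ⟨e1c, e1c', p1c, p1c'⟩ := he a₁ (by simp)
  obtain ⟨e2c, e2c', p2c, p2c'⟩ := he a₂ (by simp)
  obtain ⟨e3c, e3c', p3c, p3c'⟩ := he a₃ (by simp)
  obtain ⟨n1c, n1c'⟩ := hne a₁ (by simp)
  obtain ⟨n2c, n2c'⟩ := hne a₂ (by simp)
  obtain ⟨n3c, n3c'⟩ := hne a₃ (by simp)
  have i2c := L.inj.ne_iff.mpr n2c
  have i2c' := L.inj.ne_iff.mpr n2c'
  have i1c := L.inj.ne_iff.mpr n1c
  have i3c' := L.inj.ne_iff.mpr n3c'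
  have i3c := L.inj.ne_iff.mpr n3c
  have i1c' := L.inj.ne_iff.mpr n1c'
  rcases lt_or_gt_of_ne i2c with h | h
  · -- a₂ < c, so a₁ < a₂ < c
    exact pair_conflict L hbook hcc' h12 e1c e1c' e2c e2c' p1c p1c' p2c p2c' (Or.inl h)
  · rcases lt_or_gt_of_ne i2c' with h' | h'
    · -- c < a₂ < c'
      rcases lt_or_gt_of_ne i3c' with h3' | h3'
      · -- a₂, a₃ in middle
        exact pair_conflict L hbook hcc' h23 e2c e2c' e3c e3c' p2c p2c' p3c p3c'
          (Or.inr (Or.inl ⟨h, h3'⟩))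
      · -- a₃ > c'
        rcases lt_or_gt_of_ne i1c with h1 | h1
        · -- a₁ < c, a₃ > c'
          exact pair_conflict L hbook hcc' (h12.trans h23) e1c e1c' e3c e3c' p1c p1c' p3c p3c'
            (Or.inr (Or.inr (Or.inr ⟨h1, h3'⟩)))
        · -- a₁, a₂ in middle
          exact pair_conflict L hbook hcc' h12 e1c e1c' e2c e2c' p1c p1c' p2c p2c'
            (Or.inr (Or.inl ⟨h1, h'⟩))
    · -- a₂ > c', so a₂, a₃ > c'
      exact pair_conflict L hbook hcc' h23 e2c e2c' e3c e3c' p2c p2c' p3c p3c'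
        (Or.inr (Or.inr (Or.inl h')))

/-- K_{2,3} on one page contradicts being a book embedding. -/
lemma no_K23 (hbook : L.IsBook) {c c' u v w : V} {p : ℕ}
    (hcc : c ≠ c') (huv : u ≠ v) (huw : u ≠ w) (hvw : v ≠ w)
    (hne : ∀ y ∈ [u, v, w], y ≠ c ∧ y ≠ c')
    (he : ∀ y ∈ [u, v, w], s(y,c) ∈ G.edgeSet ∧ s(y,c') ∈ G.edgeSet ∧
      L.page s(y,c) = p ∧ L.page s(y,c') = p) : False := by
  -- wlog pos c < pos c'
  have hsw : ∀ c c' : V, c ≠ c' → L.pos c < L.pos c' →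
      (∀ y ∈ [u, v, w], y ≠ c ∧ y ≠ c') →
      (∀ y ∈ [u, v, w], s(y,c) ∈ G.edgeSet ∧ s(y,c') ∈ G.edgeSet ∧
        L.page s(y,c) = p ∧ L.page s(y,c') = p) → False := by
    intro c c' hcc hlt hne he
    -- sort u v w by position
    have hiuv := L.inj.ne_iff.mpr huv
    have hiuw := L.inj.ne_iff.mpr huw
    have hivw := L.inj.ne_iff.mpr hvw
    have sorted : ∃ a₁ a₂ a₃ : V, L.pos a₁ < L.pos a₂ ∧ L.pos a₂ < L.pos a₃ ∧
        ∀ y ∈ [a₁, a₂, a₃], y ∈ [u, v, w] := by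
      rcases lt_or_gt_of_ne hiuv with h1 | h1 <;> rcases lt_or_gt_of_ne hiuw with h2 | h2 <;>
        rcases lt_or_gt_of_ne hivw with h3 | h3
      · exact ⟨u, v, w, h1, h3, by intro y hy; simp at hy ⊢; tauto⟩
      · exact ⟨u, w, v, h2, h3, by intro y hy; simp at hy ⊢; tauto⟩
      · exact ⟨u, v, w, h1, h3, by intro y hy; simp at hy ⊢; tauto⟩
      · exact ⟨w, u, v, h2, h1, by intro y hy; simp at hy ⊢; tauto⟩
      · exact ⟨v, u, w, h1, h2, by intro y hy; simp at hy ⊢; tauto⟩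
      · exact ⟨w, v, u, h3, h1, by intro y hy; simp at hy ⊢; tauto⟩
      · exact ⟨v, w, u, h3, h2, by intro y hy; simp at hy ⊢; tauto⟩
      · exact ⟨w, v, u, h3, h1, by intro y hy; simp at hy ⊢; tauto⟩
    obtain ⟨a₁, a₂, a₃, h12, h23, hmem⟩ := sorted
    exact sorted_K23 L hbook hlt h12 h23
      (fun y hy => hne y (hmem y hy)) (fun y hy => he y (hmem y hy))
  rcases lt_or_gt_of_ne (L.inj.ne_iff.mpr hcc) with h | h
  · exact hsw c c' hcc h hne he
  · refine hsw c' c hcc.symm h (fun y hy => (hne y hy).symm) (fun y hy => ?_)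
    obtain ⟨h1, h2, h3, h4⟩ := he y hy
    exact ⟨h2, h1, h4, h3⟩

end Part1

set_option linter.unusedSectionVars false

section Part2
variable {V : Type} [Fintype V] [DecidableEq V] {G : SimpleGraph V} (L : LinearEmbedding G)

lemma pagesAt_finite (v : V) : (L.pagesAt v).Finite := by
  have : L.pagesAt v ⊆ L.page '' {e | e ∈ G.edgeSet ∧ v ∈ e} := by
    rintro i ⟨e, he, hv, hp⟩
    exact ⟨e, ⟨he, hv⟩, hp⟩
  exact ((Set.toFinite _).image L.page).subset this

/-- among more than `2·k·k·k·ℓ` vertices all adjacent to each element of a `k`-set `D`,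
there is one whose edges to `D` lie on pairwise distinct pages. -/
lemma exists_good {ℓ k : ℕ} (hbook : L.IsBook) (hloc : L.IsLocal ℓ)
    (D : Finset V) (hD : D.card = k) (Cand : Finset V)
    (hcard : 2 * (k*(k*(k*ℓ))) + 1 ≤ Cand.card)
    (hadj : ∀ y ∈ Cand, ∀ d ∈ D, G.Adj y d)
    (hdisj : ∀ y ∈ Cand, y ∉ D) :
    ∃ y ∈ Cand, ∀ c ∈ D, ∀ c' ∈ D, c ≠ c' → L.page s(y,c) ≠ L.page s(y,c') := by
  classical
  by_contra hcon
  push_neg at hcon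
  set Q : V → V × V × ℕ → Prop := fun y z =>
    z.1 ∈ D ∧ z.2.1 ∈ D ∧ z.1 ≠ z.2.1 ∧
      L.page s(y, z.1) = z.2.2 ∧ L.page s(y, z.2.1) = z.2.2 with hQ
  have hbad : ∀ y ∈ Cand, ∃ z, Q y z := by
    intro y hy
    obtain ⟨c, hc, c', hc', hne, hpg⟩ := hcon y hy
    exact ⟨(c, c', L.page s(y, c')), hc, hc', hne, hpg, rfl⟩
  set f : V → V × V × ℕ := fun y =>
    if h : ∃ z, Q y z then h.choose else (y, y, 0) with hf
  have hfQ : ∀ y ∈ Cand, Q y (f y) := by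
    intro y hy
    rw [hf]
    simp only [hbad y hy, dif_pos]
    exact (hbad y hy).choose_spec
  set P : Finset ℕ := D.biUnion (fun c => (pagesAt_finite L c).toFinset) with hP
  have hPcard : P.card ≤ k * ℓ := by
    calc P.card ≤ ∑ c ∈ D, ((pagesAt_finite L c).toFinset).card := Finset.card_biUnion_le
    _ ≤ ∑ c ∈ D, ℓ := Finset.sum_le_sum (fun c _ => by
        rw [← Set.ncard_eq_toFinset_card _ (pagesAt_finite L c)]; exact hloc c)
    _ = k * ℓ := by rw [Finset.sum_const, hD, smul_eq_mul]
  set t : Finset (V × V × ℕ) := D ×ˢ D ×ˢ P with ht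
  have htcard : t.card ≤ k * (k * (k * ℓ)) := by
    rw [ht, Finset.card_product, Finset.card_product, hD]
    exact Nat.mul_le_mul_left _ (Nat.mul_le_mul_left _ hPcard)
  have hmaps : ∀ y ∈ Cand, f y ∈ t := by
    intro y hy
    obtain ⟨h1, h2, h3, h4, h5⟩ := hfQ y hy
    rw [ht, Finset.mem_product, Finset.mem_product]
    refine ⟨h1, h2, ?_⟩
    simp only [hP, Finset.mem_biUnion]
    refine ⟨(f y).2.1, h2, ?_⟩
    rw [Set.Finite.mem_toFinset]
    refine ⟨s(y, (f y).2.1), ?_, by simp, h5⟩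
    exact (SimpleGraph.mem_edgeSet G).mpr (hadj y hy _ h2)
  have hlt : t.card * 2 < Cand.card := by omega
  obtain ⟨z, hz, h2⟩ := Finset.exists_lt_card_fiber_of_mul_lt_card_of_maps_to hmaps hlt
  obtain ⟨u, v, w, hu, hv, hw, huv, huw, hvw⟩ := Finset.two_lt_card_iff.mp h2
  rw [Finset.mem_filter] at hu hv hw
  obtain ⟨c, c', p⟩ := z
  have key : ∀ y, y ∈ Cand → f y = (c, c', p) →
      c ∈ D ∧ c' ∈ D ∧ c ≠ c' ∧ L.page s(y,c) = p ∧ L.page s(y,c') = p := by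
    intro y hy hfy
    have := hfQ y hy
    rw [hfy] at this
    exact this
  obtain ⟨hcD, hc'D, hcc', puc, puc'⟩ := key u hu.1 hu.2
  obtain ⟨_, _, _, pvc, pvc'⟩ := key v hv.1 hv.2
  obtain ⟨_, _, _, pwc, pwc'⟩ := key w hw.1 hw.2
  have hne : ∀ y ∈ [u, v, w], y ≠ c ∧ y ≠ c' := by
    intro y hy
    have hyC : y ∈ Cand := by
      simp only [List.mem_cons, List.mem_singleton] at hy
      rcases hy with rfl | rfl | hy
      · exact hu.1
      · exact hv.1
      · simp at hy; subst hy; exact hw.1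
    exact ⟨fun h => hdisj y hyC (h ▸ hcD), fun h => hdisj y hyC (h ▸ hc'D)⟩
  have he : ∀ y ∈ [u, v, w], s(y,c) ∈ G.edgeSet ∧ s(y,c') ∈ G.edgeSet ∧
      L.page s(y,c) = p ∧ L.page s(y,c') = p := by
    intro y hy
    have hyC : y ∈ Cand := by
      simp only [List.mem_cons, List.mem_singleton] at hy
      rcases hy with rfl | rfl | hy
      · exact hu.1
      · exact hv.1
      · simp at hy; subst hy; exact hw.1
    refine ⟨(SimpleGraph.mem_edgeSet G).mpr (hadj y hyC _ hcD), (SimpleGraph.mem_edgeSet G).mpr (hadj y hyC _ hc'D), ?_, ?_⟩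
    · simp only [List.mem_cons, List.mem_singleton] at hy
      rcases hy with rfl | rfl | hy
      · exact puc
      · exact pvc
      · simp at hy; subst hy; exact pwc
    · simp only [List.mem_cons, List.mem_singleton] at hy
      rcases hy with rfl | rfl | hy
      · exact puc'
      · exact pvc'
      · simp at hy; subst hy; exact pwc'
  exact no_K23 L hbook hcc' huv huw hvw hne he

end Part2

/-- Existence of the "rich" attachment structure. -/
lemma gadget_exists (k b T : ℕ) (hb : 1 ≤ b) :
    ∃ (M : ℕ) (att : Fin M → Finset (Fin M)) (lev : Fin M → ℕ),
      k + 1 ≤ M ∧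
      (∀ j, ∀ i ∈ att j, i < j) ∧
      (∀ j : Fin M, (j:ℕ) ≤ k → att j = Finset.univ.filter (· < j)) ∧
      (∀ j : Fin M, k < (j:ℕ) → (att j).card = k) ∧
      (∀ j, ∀ a ∈ att j, ∀ c ∈ att j, a ≠ c → (a ∈ att c ∨ c ∈ att a)) ∧
      (∀ j, ∀ i ∈ att j, (lev i < lev j ∨ lev j = 0)) ∧
      (∀ j : Fin M, lev j = 0 ↔ (j:ℕ) ≤ k) ∧
      (∀ j : Fin M, lev j ≤ T) ∧
      (∀ t, t + 1 ≤ T → ∀ D : Finset (Fin M), D.card = k →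
        (∀ a ∈ D, ∀ c ∈ D, a ≠ c → (a ∈ att c ∨ c ∈ att a)) →
        (∀ a ∈ D, lev a ≤ t) →
        b ≤ (Finset.univ.filter (fun x => lev x = t+1 ∧ att x = D)).card) := by
  classical
  induction T with
  | zero =>
    refine ⟨k+1, fun j => Finset.univ.filter (· < j), fun _ => 0, le_refl _,
      ?_, ?_, ?_, ?_, ?_, ?_, ?_, ?_⟩
    · intro j i hi; simpa using (Finset.mem_filter.mp hi).2
    · intro j _; rfl
    · intro j hj; exact absurd (Nat.lt_succ_iff.mp j.isLt) (Nat.not_le_of_lt hj)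
    · intro j a ha c hc hac
      rcases lt_or_gt_of_ne hac with h | h
      · exact Or.inl (Finset.mem_filter.mpr ⟨Finset.mem_univ _, h⟩)
      · exact Or.inr (Finset.mem_filter.mpr ⟨Finset.mem_univ _, h⟩)
    · intro j i _; exact Or.inr rfl
    · intro j; simpa using Nat.lt_succ_iff.mp j.isLt
    · intro j; exact le_refl 0
    · intro t ht; omega
  | succ T ih =>
    obtain ⟨M, att, lev, hM, h1, h2, h3, h4, h5, h6, h8, h7⟩ := ih
    have hbpos : 0 < b := hb
    let CL : Finset (Finset (Fin M)) :=
      (Finset.univ.powersetCard k).filter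
        (fun D => ∀ a ∈ D, ∀ c ∈ D, a ≠ c → (a ∈ att c ∨ c ∈ att a))
    let N := CL.card
    let M' := M + b * N
    have hMM' : M ≤ M' := Nat.le_add_right _ _
    have cfinj : Function.Injective
        (fun i : Fin M => (⟨i.1, lt_of_lt_of_le i.2 hMM'⟩ : Fin M')) := by
      intro a c h
      simpa [Fin.ext_iff] using h
    let cE : Fin M ↪ Fin M' := ⟨fun i => ⟨i.1, lt_of_lt_of_le i.2 hMM'⟩, cfinj⟩
    have hcEval : ∀ i : Fin M, ((cE i : Fin M') : ℕ) = (i : ℕ) := fun i => rfl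
    have hidx : ∀ j : Fin M', ¬((j:ℕ) < M) → ((j:ℕ) - M) / b < N := by
      intro j hj
      have hjlt : (j:ℕ) < M + b * N := j.isLt
      apply Nat.div_lt_of_lt_mul
      omega
    let q : (j : Fin M') → ¬((j:ℕ) < M) → Fin N := fun j h => ⟨((j:ℕ) - M) / b, hidx j h⟩
    let att' : Fin M' → Finset (Fin M') := fun j =>
      if h : (j:ℕ) < M then (att ⟨(j:ℕ), h⟩).map cE
      else ((CL.equivFin.symm (q j h) : Finset (Fin M))).map cE
    let lev' : Fin M' → ℕ := fun j => if _h : (j:ℕ) < M then lev ⟨(j:ℕ), _h⟩ else T + 1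
    have hattold : ∀ (j : Fin M') (h : (j:ℕ) < M), att' j = (att ⟨(j:ℕ), h⟩).map cE :=
      fun j h => dif_pos h
    have hattnew : ∀ (j : Fin M') (h : ¬((j:ℕ) < M)),
        att' j = ((CL.equivFin.symm (q j h) : Finset (Fin M))).map cE :=
      fun j h => dif_neg h
    have hlevold : ∀ (j : Fin M') (h : (j:ℕ) < M), lev' j = lev ⟨(j:ℕ), h⟩ :=
      fun j h => dif_pos h
    have hlevnew : ∀ (j : Fin M') (h : ¬((j:ℕ) < M)), lev' j = T + 1 :=
      fun j h => dif_neg h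
    have hattoldE : ∀ (i : Fin M), att' (cE i) = (att i).map cE := by
      intro i
      rw [hattold (cE i) i.2]
      rfl
    have hlevoldE : ∀ (i : Fin M), lev' (cE i) = lev i := by
      intro i
      rw [hlevold (cE i) i.2]
      rfl
    have hmemE : ∀ (i j : Fin M), cE i ∈ att' (cE j) ↔ i ∈ att j := by
      intro i j
      rw [hattoldE]
      exact Finset.mem_map' cE
    have hCLprop : ∀ (j : Fin M') (h : ¬((j:ℕ) < M)),
        ((CL.equivFin.symm (q j h) : Finset (Fin M))).card = k ∧
        (∀ a ∈ (CL.equivFin.symm (q j h) : Finset (Fin M)),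
          ∀ c ∈ (CL.equivFin.symm (q j h) : Finset (Fin M)),
          a ≠ c → (a ∈ att c ∨ c ∈ att a)) := by
      intro j h
      have hmem := (CL.equivFin.symm (q j h)).2
      rw [Finset.mem_filter, Finset.mem_powersetCard] at hmem
      exact ⟨hmem.1.2, hmem.2⟩
    refine ⟨M', att', lev', le_trans hM hMM', ?_, ?_, ?_, ?_, ?_, ?_, ?_, ?_⟩
    · -- h1 : att below
      intro j i hi
      by_cases h : (j:ℕ) < M
      · rw [hattold j h] at hi
        obtain ⟨i₀, hi₀, rfl⟩ := Finset.mem_map.mp hi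
        have hlt : (i₀ : ℕ) < (j:ℕ) := h1 _ _ hi₀
        exact hlt
      · rw [hattnew j h] at hi
        obtain ⟨i₀, hi₀, rfl⟩ := Finset.mem_map.mp hi
        have : (i₀ : ℕ) < M := i₀.isLt
        show (i₀ : ℕ) < (j : ℕ)
        omega
    · -- h2 : base attachments
      intro j hj
      have h : (j:ℕ) < M := lt_of_le_of_lt hj hM
      rw [hattold j h]
      rw [h2 ⟨(j:ℕ), h⟩ hj]
      ext x
      simp only [Finset.mem_map, Finset.mem_filter, Finset.mem_univ, true_and]
      constructor
      · rintro ⟨i₀, hi₀, rfl⟩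
        exact (hi₀ : (i₀:ℕ) < (j:ℕ))
      · intro hx
        have hxv : (x:ℕ) < (j:ℕ) := hx
        refine ⟨⟨(x:ℕ), by omega⟩, ?_, ?_⟩
        · exact hxv
        · apply Fin.ext; rfl
    · -- h3 : cards
      intro j hj
      by_cases h : (j:ℕ) < M
      · rw [hattold j h, Finset.card_map]
        exact h3 _ hj
      · rw [hattnew j h, Finset.card_map]
        exact (hCLprop j h).1
    · -- h4 : clique
      intro j a ha c hc hac
      have key : ∀ (S : Finset (Fin M)),
          (∀ a' ∈ S, ∀ c' ∈ S, a' ≠ c' → (a' ∈ att c' ∨ c' ∈ att a')) →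
          a ∈ S.map cE → c ∈ S.map cE → (a ∈ att' c ∨ c ∈ att' a) := by
        intro S hS haS hcS
        obtain ⟨a₀, ha₀, rfl⟩ := Finset.mem_map.mp haS
        obtain ⟨c₀, hc₀, rfl⟩ := Finset.mem_map.mp hcS
        have hne : a₀ ≠ c₀ := fun h => hac (by rw [h])
        rcases hS a₀ ha₀ c₀ hc₀ hne with h | h
        · exact Or.inl ((hmemE a₀ c₀).mpr h)
        · exact Or.inr ((hmemE c₀ a₀).mpr h)
      by_cases h : (j:ℕ) < M
      · rw [hattold j h] at ha hc
        exact key _ (fun a' ha' c' hc' => h4 _ _ ha' _ hc') ha hc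
      · rw [hattnew j h] at ha hc
        exact key _ (hCLprop j h).2 ha hc
    · -- h5 : levels decrease along att
      intro j i hi
      by_cases h : (j:ℕ) < M
      · rw [hattold j h] at hi
        obtain ⟨i₀, hi₀, rfl⟩ := Finset.mem_map.mp hi
        rw [hlevoldE, hlevold j h]
        exact h5 _ _ hi₀
      · rw [hattnew j h] at hi
        obtain ⟨i₀, hi₀, rfl⟩ := Finset.mem_map.mp hi
        left
        rw [hlevoldE, hlevnew j h]
        exact Nat.lt_succ_of_le (h8 i₀)
    · -- h6 : level zero iff base
      intro j
      by_cases h : (j:ℕ) < M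
      · rw [hlevold j h]
        exact h6 ⟨(j:ℕ), h⟩
      · rw [hlevnew j h]
        constructor
        · intro hc; omega
        · intro hc
          exact absurd (lt_of_le_of_lt hc hM) h
    · -- h8 : levels bounded
      intro j
      by_cases h : (j:ℕ) < M
      · rw [hlevold j h]; exact le_trans (h8 _) (Nat.le_succ _)
      · rw [hlevnew j h]
    · -- h7 : richness
      intro t ht D hDcard hDclique hDlev
      have hDold : ∀ a ∈ D, (a:ℕ) < M := by
        intro a ha
        by_contra hcon
        have hl := hlevnew a hcon
        have := hDlev a ha
        omega
      let D₀ : Finset (Fin M) := Finset.univ.filter (fun i : Fin M => cE i ∈ D)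
      have hmapD : D₀.map cE = D := by
        ext x
        simp only [Finset.mem_map, Finset.mem_filter, Finset.mem_univ, true_and, D₀]
        constructor
        · rintro ⟨i₀, hi₀, rfl⟩; exact hi₀
        · intro hx
          refine ⟨⟨(x:ℕ), hDold x hx⟩, ?_, ?_⟩
          · have : cE ⟨(x:ℕ), hDold x hx⟩ = x := by apply Fin.ext; rfl
            rwa [this]
          · apply Fin.ext; rfl
      have hD₀card : D₀.card = k := by
        rw [← hDcard, ← hmapD, Finset.card_map]
      have hD₀clique : ∀ a ∈ D₀, ∀ c ∈ D₀, a ≠ c → (a ∈ att c ∨ c ∈ att a) := by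
        intro a ha c hc hac
        have haD : cE a ∈ D := by rw [← hmapD]; exact Finset.mem_map_of_mem cE ha
        have hcD : cE c ∈ D := by rw [← hmapD]; exact Finset.mem_map_of_mem cE hc
        rcases hDclique _ haD _ hcD (fun h => hac (cE.injective h)) with h | h
        · exact Or.inl ((hmemE a c).mp h)
        · exact Or.inr ((hmemE c a).mp h)
      rcases Nat.lt_or_ge (t+1) (T+1) with hcase | hcase
      · -- old level: use IH richness
        have ht' : t + 1 ≤ T := by omega
        have hD₀lev : ∀ a ∈ D₀, lev a ≤ t := by
          intro a ha
          have hmm : cE a ∈ D := by rw [← hmapD]; exact Finset.mem_map_of_mem cE ha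
          have := hDlev _ hmm
          rwa [hlevoldE] at this
        have hold := h7 t ht' D₀ hD₀card hD₀clique hD₀lev
        refine le_trans hold ?_
        apply Finset.card_le_card_of_injOn (fun x => cE x)
        · intro x hx
          rw [Finset.mem_coe, Finset.mem_filter] at hx ⊢
          obtain ⟨-, hx1, hx2⟩ := hx
          refine ⟨Finset.mem_univ _, ?_, ?_⟩
          · rw [hlevoldE]; exact hx1
          · rw [hattoldE, hx2, hmapD]
        · intro x _ y _ h; exact cE.injective h
      · -- new level: t = T
        have htT : t = T := by omega
        subst htT
        have hD₀CL : D₀ ∈ CL := by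
          rw [Finset.mem_filter, Finset.mem_powersetCard]
          exact ⟨⟨Finset.subset_univ _, hD₀card⟩, hD₀clique⟩
        let qstar : Fin N := CL.equivFin ⟨D₀, hD₀CL⟩
        have hnewval : ∀ r : ℕ, r < b → M + (r + (qstar:ℕ) * b) < M' := by
          intro r hr
          have hq : (qstar:ℕ) < N := qstar.isLt
          have hmul : ((qstar:ℕ) + 1) * b ≤ N * b := Nat.mul_le_mul_right _ (by omega)
          have : r + (qstar:ℕ) * b < N * b := by
            have : r + (qstar:ℕ) * b < ((qstar:ℕ) + 1) * b := by
              have : ((qstar:ℕ) + 1) * b = (qstar:ℕ) * b + b := by ring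
              omega
            omega
          show M + (r + (qstar:ℕ) * b) < M + b * N
          have : b * N = N * b := Nat.mul_comm b N
          omega
        have hcalc : ∀ (r : ℕ), r < b → (M + (r + (qstar:ℕ) * b) - M) / b = (qstar:ℕ) := by
          intro r hr
          have : M + (r + (qstar:ℕ) * b) - M = r + (qstar:ℕ) * b := by omega
          rw [this, Nat.add_mul_div_right r _ hbpos, Nat.div_eq_of_lt hr, Nat.zero_add]
        apply le_trans (le_of_eq (Finset.card_range b).symm)
        apply Finset.card_le_card_of_injOn
          (fun r => if hr : r < b then (⟨M + (r + (qstar:ℕ) * b), hnewval r hr⟩ : Fin M')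
            else ⟨0, by omega⟩)
        · intro r hrmem
          have hr : r < b := Finset.mem_range.mp hrmem
          simp only [dif_pos hr]
          rw [Finset.mem_coe, Finset.mem_filter]
          have hnotold : ¬((M + (r + (qstar:ℕ) * b)) < M) := by omega
          refine ⟨Finset.mem_univ _, ?_, ?_⟩
          · exact hlevnew _ hnotold
          · rw [hattnew _ hnotold]
            have hqeq : q (⟨M + (r + (qstar:ℕ) * b), hnewval r hr⟩ : Fin M') hnotold = qstar := by
              apply Fin.ext
              exact hcalc r hr
            rw [hqeq]
            have : CL.equivFin.symm qstar = ⟨D₀, hD₀CL⟩ := CL.equivFin.symm_apply_apply _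
            rw [this]
            exact hmapD
        · intro r hr s hs hrs
          have hr' : r < b := Finset.mem_range.mp (by simpa using hr)
          have hs' : s < b := Finset.mem_range.mp (by simpa using hs)
          simp only [dif_pos hr', dif_pos hs'] at hrs
          have : M + (r + (qstar:ℕ) * b) = M + (s + (qstar:ℕ) * b) := congrArg Fin.val hrs
          omega

/-- The graph determined by an attachment structure. -/
def gadgetGraph (M : ℕ) (att : Fin M → Finset (Fin M)) : SimpleGraph (Fin M) where
  Adj a b := a ≠ b ∧ (a ∈ att b ∨ b ∈ att a)
  symm := by
    refine ⟨fun a b h => ?_⟩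
    exact ⟨h.1.symm, h.2.symm⟩
  loopless := ⟨fun a h => h.1 rfl⟩

lemma card_filter_val_lt (M m : ℕ) (h : m ≤ M) :
    (Finset.univ.filter (fun x : Fin M => (x:ℕ) < m)).card = m := by
  have : (Finset.univ.map (Fin.castLEEmb h)) =
      Finset.univ.filter (fun x : Fin M => (x:ℕ) < m) := by
    ext x
    simp only [Finset.mem_map, Finset.mem_filter, Finset.mem_univ, true_and]
    constructor
    · rintro ⟨i, -, rfl⟩
      exact i.isLt
    · intro hx
      exact ⟨⟨(x:ℕ), hx⟩, rfl⟩
  rw [← this, Finset.card_map, Finset.card_univ, Fintype.card_fin]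

lemma gadget_isKTree (k M : ℕ) (att : Fin M → Finset (Fin M)) (hM : k + 1 ≤ M)
    (h1 : ∀ j, ∀ i ∈ att j, i < j)
    (h2 : ∀ j : Fin M, (j:ℕ) ≤ k → att j = Finset.univ.filter (· < j))
    (h3 : ∀ j : Fin M, k < (j:ℕ) → (att j).card = k)
    (h4 : ∀ j, ∀ a ∈ att j, ∀ c ∈ att j, a ≠ c → (a ∈ att c ∨ c ∈ att a)) :
    IsKTree k (gadgetGraph M att) Finset.univ := by
  classical
  let Gm : ℕ → SimpleGraph (Fin M) := fun m =>
    { Adj := fun a b => (a ≠ b ∧ (a ∈ att b ∨ b ∈ att a)) ∧ (a:ℕ) < m ∧ (b:ℕ) < m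
      symm := by
        refine ⟨fun a b hab => ?_⟩
        exact ⟨⟨hab.1.1.symm, hab.1.2.symm⟩, hab.2.2, hab.2.1⟩
      loopless := ⟨fun a hh => hh.1.1 rfl⟩ }
  have main : ∀ m, k + 1 ≤ m → m ≤ M →
      IsKTree k (Gm m) (Finset.univ.filter (fun x : Fin M => (x:ℕ) < m)) := by
    intro m
    induction m with
    | zero => omega
    | succ m ihm =>
      intro hk hle
      rcases Nat.lt_or_ge k m with hkm | hkm
      · -- step case : m ≥ k+1
        have hmM : m ≤ M := by omega
        have ih := ihm (by omega) hmM
        set v : Fin M := ⟨m, by omega⟩ with hv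
        have hstep := IsKTree.extend (Gm m) (Gm (m+1))
          (Finset.univ.filter (fun x : Fin M => (x:ℕ) < m)) (att v) v ih
          (by simp [hv])
          (by
            intro i hi
            have := h1 v i hi
            simp only [Finset.mem_filter, Finset.mem_univ, true_and]
            exact this)
          (h3 v hkm)
          (by
            intro a ha c hc hac
            have hor := h4 v a ha c hc hac
            have hav : (a:ℕ) < m := h1 v a ha
            have hcv : (c:ℕ) < m := h1 v c hc
            exact ⟨⟨hac, hor⟩, hav, hcv⟩)
          (by
            intro a c
            have hvm : (v:ℕ) = m := rfl
            constructor
            · rintro ⟨⟨hne, hor⟩, ha, hc⟩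
              by_cases hav : (a:ℕ) < m
              · by_cases hcv : (c:ℕ) < m
                · exact Or.inl ⟨⟨hne, hor⟩, hav, hcv⟩
                · have hcv' : c = v := by apply Fin.ext; omega
                  refine Or.inr (Or.inr ⟨hcv', ?_⟩)
                  rw [hcv'] at hor
                  rcases hor with h | h
                  · exact h
                  · exfalso
                    have hlt : (v:ℕ) < (a:ℕ) := h1 a v h
                    omega
              · have hav' : a = v := by apply Fin.ext; omega
                refine Or.inr (Or.inl ⟨hav', ?_⟩)
                rw [hav'] at hor
                rcases hor with h | h
                · exfalso
                  have hlt : (v:ℕ) < (c:ℕ) := h1 c v h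
                  omega
                · exact h
            · rintro (⟨adj, ha, hc⟩ | ⟨hav, hc⟩ | ⟨hcv, ha⟩)
              · exact ⟨adj, by omega, by omega⟩
              · have hcm : (c:ℕ) < m := h1 v c hc
                have ham : (a:ℕ) = m := by rw [hav]
                have hne : a ≠ c := by
                  intro h
                  rw [hav] at h
                  rw [← h] at hc
                  have hx : (v:ℕ) < (v:ℕ) := h1 v v hc
                  omega
                refine ⟨⟨hne, Or.inr ?_⟩, by omega, by omega⟩
                rw [hav]
                exact hc
              · have ham : (a:ℕ) < m := h1 v a ha
                have hcm : (c:ℕ) = m := by rw [hcv]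
                have hne : a ≠ c := by
                  intro h
                  rw [hcv] at h
                  rw [h] at ha
                  have hx : (v:ℕ) < (v:ℕ) := h1 v v ha
                  omega
                refine ⟨⟨hne, Or.inl ?_⟩, by omega, by omega⟩
                rw [hcv]
                exact ha)
        have heq : insert v (Finset.univ.filter (fun x : Fin M => (x:ℕ) < m)) =
            Finset.univ.filter (fun x : Fin M => (x:ℕ) < m + 1) := by
          ext x
          simp only [Finset.mem_insert, Finset.mem_filter, Finset.mem_univ, true_and]
          have hvm : (v:ℕ) = m := rfl
          constructor
          · rintro (rfl | hx)
            · omega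
            · omega
          · intro hx
            by_cases hxm : (x:ℕ) < m
            · exact Or.inr hxm
            · left; apply Fin.ext; omega
        rwa [heq] at hstep
      · -- base case : m + 1 = k + 1
        have hmk : m = k := by omega
        subst hmk
        refine IsKTree.base _ _ (card_filter_val_lt M (m+1) hle) ?_
        intro a c
        simp only [Finset.mem_filter, Finset.mem_univ, true_and]
        constructor
        · rintro ⟨⟨hne, hor⟩, ha, hc⟩
          exact ⟨ha, hc, hne⟩
        · rintro ⟨ha, hc, hne⟩
          refine ⟨⟨hne, ?_⟩, ha, hc⟩
          rcases lt_or_gt_of_ne hne with h | h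
          · left
            rw [h2 c (by omega)]
            simp only [Finset.mem_filter, Finset.mem_univ, true_and]
            exact h
          · right
            rw [h2 a (by omega)]
            simp only [Finset.mem_filter, Finset.mem_univ, true_and]
            exact h
  have hfinal := main M hM (le_refl M)
  have hGeq : Gm M = gadgetGraph M att := by
    ext a c
    show ((a ≠ c ∧ (a ∈ att c ∨ c ∈ att a)) ∧ (a:ℕ) < M ∧ (c:ℕ) < M) ↔ _
    constructor
    · rintro ⟨h, -⟩; exact h
    · intro h; exact ⟨h, a.isLt, c.isLt⟩
  have hSeq : Finset.univ.filter (fun x : Fin M => (x:ℕ) < M) = (Finset.univ : Finset (Fin M)) := by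
    ext x; simp [x.isLt]
  rwa [hGeq, hSeq] at hfinal

lemma ktree_scheme {V : Type*} [DecidableEq V] {k : ℕ} {G : SimpleGraph V} {s : Finset V}
    (h : IsKTree k G s) :
    (∀ a b, G.Adj a b → a ∈ s ∧ b ∈ s) ∧
    ∃ (m : ℕ) (x : ℕ → V) (N : ℕ → Finset ℕ),
      m = s.card ∧ k + 1 ≤ m ∧
      (∀ i j, i < m → j < m → x i = x j → i = j) ∧
      (s = (Finset.range m).image x) ∧
      (∀ j i, j < m → (i ∈ N j ↔ (i < j ∧ G.Adj (x i) (x j)))) ∧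
      (∀ i j, i < j → j < m → j ≤ k → G.Adj (x i) (x j)) ∧
      (∀ j, j < m → k < j → (N j).card = k) ∧
      (∀ j, j < m → ∀ i₁ i₂, i₁ < j → i₂ < j → G.Adj (x i₁) (x j) → G.Adj (x i₂) (x j) →
        i₁ ≠ i₂ → G.Adj (x i₁) (x i₂)) := by
  classical
  induction h with
  | base G s hcard hadj =>
    constructor
    · intro a b hab
      rw [hadj] at hab
      exact ⟨hab.1, hab.2.1⟩
    · have hpos : 0 < s.toList.length := by
        rw [Finset.length_toList, hcard]; omega
      set l := s.toList with hl
      set x : ℕ → V := fun i => if hi : i < l.length then l.get ⟨i, hi⟩ else l.get ⟨0, hpos⟩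
        with hx
      have hxi : ∀ i (hi : i < l.length), x i = l.get ⟨i, hi⟩ := by
        intro i hi; rw [hx]; simp only [hi, dif_pos]
      have hlen : l.length = s.card := Finset.length_toList s
      have hnd : l.Nodup := Finset.nodup_toList s
      have hmem : ∀ a, a ∈ l ↔ a ∈ s := fun a => Finset.mem_toList
      have hadjall : ∀ i j, i < j → j < s.card → G.Adj (x i) (x j) := by
        intro i j hij hj
        rw [hadj]
        refine ⟨?_, ?_, ?_⟩
        · rw [hxi i (by omega)]; exact (hmem _).mp (List.get_mem l _)
        · rw [hxi j (by omega)]; exact (hmem _).mp (List.get_mem l _)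
        · rw [hxi i (by omega), hxi j (by omega)]
          intro hcon
          have := (List.Nodup.get_inj_iff hnd).mp hcon
          have := congrArg Fin.val this
          simp at this
          omega
      refine ⟨s.card, x, fun j => Finset.range j, rfl, by omega, ?_, ?_, ?_, ?_, ?_, ?_⟩
      · intro i j hi hj hxij
        rw [hxi i (by omega), hxi j (by omega)] at hxij
        have := (List.Nodup.get_inj_iff hnd).mp hxij
        exact congrArg Fin.val this
      · ext a
        simp only [Finset.mem_image, Finset.mem_range]
        constructor
        · intro ha
          obtain ⟨⟨i, hi⟩, hget⟩ := List.mem_iff_get.mp ((hmem a).mpr ha)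
          exact ⟨i, by omega, by rw [hxi i hi]; exact hget⟩
        · rintro ⟨i, hi, rfl⟩
          rw [hxi i (by omega)]
          exact (hmem _).mp (List.get_mem l _)
      · intro j i hj
        simp only [Finset.mem_range]
        constructor
        · intro hij
          exact ⟨hij, hadjall i j hij hj⟩
        · exact fun h => h.1
      · intro i j hij hj _
        exact hadjall i j hij hj
      · intro j hj hkj
        rw [hcard] at hj
        omega
      · intro j hj i₁ i₂ h1 h2 _ _ hne
        rcases Nat.lt_or_ge i₁ i₂ with h | h
        · exact hadjall i₁ i₂ h (by omega)
        · exact (hadjall i₂ i₁ (by omega) (by omega)).symm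
  | extend G G' s c v hG hv hc hcard hclique hG' ih =>
    obtain ⟨hin, m, x, N, hm, hk1, hinj, himg, hN, hbase, hNcard, hclq⟩ := ih
    have hxs : ∀ i, i < m → x i ∈ s := by
      intro i hi
      rw [himg]
      exact Finset.mem_image.mpr ⟨i, Finset.mem_range.mpr hi, rfl⟩
    have hxv : ∀ i, i < m → x i ≠ v := by
      intro i hi hcon
      exact hv (hcon ▸ hxs i hi)
    set x' : ℕ → V := fun i => if i = m then v else x i with hx'
    have hx'old : ∀ i, i < m → x' i = x i := by
      intro i hi
      show (if i = m then v else x i) = x i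
      rw [if_neg (by omega)]
    have hx'new : x' m = v := by
      show (if m = m then v else x m) = v
      rw [if_pos rfl]
    have htrans : ∀ i j, i < m → j < m → (G'.Adj (x i) (x j) ↔ G.Adj (x i) (x j)) := by
      intro i j hi hj
      rw [hG']
      constructor
      · rintro (h | ⟨h, -⟩ | ⟨h, -⟩)
        · exact h
        · exact absurd h (hxv i hi)
        · exact absurd h (hxv j hj)
      · exact Or.inl
    have hnewadj : ∀ i, i < m → (G'.Adj (x i) v ↔ x i ∈ c) := by
      intro i hi
      rw [hG']
      constructor
      · rintro (h | ⟨h, -⟩ | ⟨-, h⟩)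
        · exact absurd (hin _ _ h).2 hv
        · exact absurd h (hxv i hi)
        · exact h
      · intro h
        exact Or.inr (Or.inr ⟨rfl, h⟩)
    constructor
    · intro a b hab
      rw [hG'] at hab
      rcases hab with h | ⟨rfl, h⟩ | ⟨rfl, h⟩
      · exact ⟨Finset.mem_insert_of_mem (hin _ _ h).1, Finset.mem_insert_of_mem (hin _ _ h).2⟩
      · exact ⟨Finset.mem_insert_self _ _, Finset.mem_insert_of_mem (hc h)⟩
      · exact ⟨Finset.mem_insert_of_mem (hc h), Finset.mem_insert_self _ _⟩
    set N' : ℕ → Finset ℕ :=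
      fun j => if j = m then (Finset.range m).filter (fun i => x i ∈ c) else N j with hN'
    have hN'old : ∀ j, j < m → N' j = N j := by
      intro j hj
      show (if j = m then _ else N j) = N j
      rw [if_neg (by omega)]
    have hN'new : N' m = (Finset.range m).filter (fun i => x i ∈ c) := by
      show (if m = m then _ else N m) = _
      rw [if_pos rfl]
    refine ⟨m + 1, x', N', ?_, by omega, ?_, ?_, ?_, ?_, ?_, ?_⟩
    · rw [Finset.card_insert_of_notMem hv, hm]
    · -- injectivity
      intro i j hi hj hij
      rcases Nat.lt_or_ge i m with him | him <;> rcases Nat.lt_or_ge j m with hjm | hjm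
      · rw [hx'old i him, hx'old j hjm] at hij
        exact hinj i j him hjm hij
      · have hjm' : j = m := by omega
        rw [hx'old i him, hjm', hx'new] at hij
        exact absurd hij (hxv i him)
      · have him' : i = m := by omega
        rw [hx'old j hjm, him', hx'new] at hij
        exact absurd hij.symm (hxv j hjm)
      · omega
    · -- image
      ext a
      simp only [Finset.mem_insert, Finset.mem_image, Finset.mem_range]
      constructor
      · rintro (rfl | ha)
        · exact ⟨m, by omega, hx'new⟩
        · rw [himg] at ha
          obtain ⟨i, hi, rfl⟩ := Finset.mem_image.mp ha
          rw [Finset.mem_range] at hi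
          exact ⟨i, by omega, hx'old i hi⟩
      · rintro ⟨i, hi, rfl⟩
        rcases Nat.lt_or_ge i m with him | him
        · rw [hx'old i him]
          exact Or.inr (hxs i him)
        · have : i = m := by omega
          rw [this, hx'new]
          exact Or.inl rfl
    · -- N characterization
      intro j i hj
      rcases Nat.lt_or_ge j m with hjm | hjm
      · rw [hN'old j hjm]
        rw [hN j i hjm]
        constructor
        · rintro ⟨hij, hadj⟩
          refine ⟨hij, ?_⟩
          rw [hx'old i (by omega), hx'old j hjm]
          exact (htrans i j (by omega) hjm).mpr hadj
        · rintro ⟨hij, hadj⟩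
          rw [hx'old i (by omega), hx'old j hjm] at hadj
          exact ⟨hij, (htrans i j (by omega) hjm).mp hadj⟩
      · have hjm' : j = m := by omega
        rw [hjm', hN'new]
        rw [Finset.mem_filter, Finset.mem_range]
        constructor
        · rintro ⟨hij, hmem⟩
          refine ⟨hij, ?_⟩
          rw [hx'old i hij, hx'new]
          exact (hnewadj i hij).mpr hmem
        · rintro ⟨hij, hadj⟩
          rw [hx'old i hij, hx'new] at hadj
          exact ⟨hij, (hnewadj i hij).mp hadj⟩
    · -- base adjacency
      intro i j hij hj hjk
      have hjm : j < m := by omega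
      have him : i < m := by omega
      rw [hx'old i him, hx'old j hjm]
      exact (htrans i j him hjm).mpr (hbase i j hij hjm hjk)
    · -- back-degree k
      intro j hj hkj
      rcases Nat.lt_or_ge j m with hjm | hjm
      · rw [hN'old j hjm]
        exact hNcard j hjm hkj
      · have hjm' : j = m := by omega
        rw [hjm', hN'new, ← hcard]
        apply Finset.card_bij (fun i _ => x i)
        · intro i hi
          exact (Finset.mem_filter.mp hi).2
        · intro i hi j' hj' hij
          rw [Finset.mem_filter, Finset.mem_range] at hi hj'
          exact hinj i j' hi.1 hj'.1 hij
        · intro y hy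
          have hys : y ∈ s := hc hy
          rw [himg] at hys
          obtain ⟨i, hi, rfl⟩ := Finset.mem_image.mp hys
          rw [Finset.mem_range] at hi
          exact ⟨i, Finset.mem_filter.mpr ⟨Finset.mem_range.mpr hi, hy⟩, rfl⟩
    · -- back-neighborhoods are cliques
      intro j hj i₁ i₂ h1 h2 ha1 ha2 hne
      rcases Nat.lt_or_ge j m with hjm | hjm
      · have h1m : i₁ < m := by omega
        have h2m : i₂ < m := by omega
        rw [hx'old i₁ h1m, hx'old i₂ h2m]
        rw [hx'old i₁ h1m, hx'old j hjm] at ha1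
        rw [hx'old i₂ h2m, hx'old j hjm] at ha2
        exact (htrans i₁ i₂ h1m h2m).mpr
          (hclq j hjm i₁ i₂ h1 h2 ((htrans _ _ h1m hjm).mp ha1) ((htrans _ _ h2m hjm).mp ha2) hne)
      · have hjm' : j = m := by omega
        rw [hjm'] at h1 h2 ha1 ha2
        have h1m : i₁ < m := h1
        have h2m : i₂ < m := h2
        rw [hx'old i₁ h1m, hx'new] at ha1
        rw [hx'old i₂ h2m, hx'new] at ha2
        have hc1 : x i₁ ∈ c := (hnewadj i₁ h1m).mp ha1
        have hc2 : x i₂ ∈ c := (hnewadj i₂ h2m).mp ha2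
        rw [hx'old i₁ h1m, hx'old i₂ h2m]
        refine (htrans i₁ i₂ h1m h2m).mpr (hclique _ hc1 _ hc2 ?_)
        intro hcon
        exact hne (hinj i₁ i₂ h1m h2m hcon)

/-- for every `ℓ` and every `k`-tree `G` there is a `k`-tree `Ḡ` such
that every `ℓ`-local book embedding of `Ḡ` contains a forest embedding of `G`, i.e.
there is a vertex set `X` with `Ḡ[X] ≅ G` such that on every page the edges of `Ḡ`
inside `X` form a forest. -/
theorem exists_kTree_forcing_forest_embedding {V : Type} [Fintype V] [DecidableEq V]
    (ℓ k : ℕ) (G : SimpleGraph V) (hG : IsKTree k G Finset.univ) :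
    ∃ (n : ℕ) (Gbar : SimpleGraph (Fin n)), IsKTree k Gbar Finset.univ ∧
      ∀ L : LinearEmbedding Gbar, L.IsBook → L.IsLocal ℓ →
        ∃ (X : Set (Fin n)) (_ : G ≃g Gbar.induce X), ∀ i : ℕ,
          (SimpleGraph.fromEdgeSet
            {e | e ∈ Gbar.edgeSet ∧ L.page e = i ∧ ∀ w ∈ e, w ∈ X}).IsAcyclic := by
  classical
  obtain ⟨hin, n, x, N, hm, hk1, hinj, himg, hN, hbase, hNcard, hclq⟩ := ktree_scheme hG
  obtain ⟨M, att, lev, hM, g1, g2, g3, g4, g5, g6, g8, g7⟩ :=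
    gadget_exists k (2 * (k*(k*(k*ℓ))) + 1) n (by omega)
  refine ⟨M, gadgetGraph M att, gadget_isKTree k M att hM g1 g2 g3 g4, ?_⟩
  intro L hbook hloc
  have h0M : (0:ℕ) < M := by omega
  have hadjdef : ∀ a bb : Fin M, (gadgetGraph M att).Adj a bb ↔
      (a ≠ bb ∧ (a ∈ att bb ∨ bb ∈ att a)) := fun a bb => Iff.rfl
  -- the base-filler sets
  set B : ℕ → Finset (Fin M) :=
    fun j => Finset.univ.filter (fun z : Fin M => 1 ≤ (z:ℕ) ∧ (z:ℕ) + j ≤ k) with hB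
  have hBmem : ∀ j (z : Fin M), z ∈ B j ↔ (1 ≤ (z:ℕ) ∧ (z:ℕ) + j ≤ k) := by
    intro j z
    rw [hB]
    simp only [Finset.mem_filter, Finset.mem_univ, true_and]
  have hBcard : ∀ j, (B j).card = k - j := by
    intro j
    have hkM : k < M := by omega
    have hcb : (B j).card = (Finset.range (k - j)).card := by
      apply Finset.card_nbij' (fun z : Fin M => (z:ℕ) - 1)
        (fun i => if h : i + 1 < M then (⟨i + 1, h⟩ : Fin M) else ⟨0, h0M⟩)
      · intro z hz
        rw [Finset.mem_coe, hBmem] at hz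
        rw [Finset.mem_coe, Finset.mem_range]
        dsimp only
        omega
      · intro a ha
        rw [Finset.mem_coe, Finset.mem_range] at ha
        dsimp only
        rw [dif_pos (by omega : a + 1 < M), Finset.mem_coe, hBmem]
        constructor
        · simp
        · simp; omega
      · intro z hz
        rw [Finset.mem_coe, hBmem] at hz
        dsimp only
        rw [dif_pos (by omega : (z:ℕ) - 1 + 1 < M)]
        apply Fin.ext
        simp
        omega
      · intro a ha
        rw [Finset.mem_coe, Finset.mem_range] at ha
        dsimp only
        rw [dif_pos (by omega : a + 1 < M)]
        simp
    rw [hcb, Finset.card_range]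
  -- the greedy construction of the copy
  have main : ∀ j, 1 ≤ j → j ≤ n → ∃ φ : ℕ → Fin M,
      ((φ 0 : ℕ) = 0) ∧
      (∀ i, i < j → lev (φ i) = i) ∧
      (∀ i, i < j → ∀ c ∈ att (φ i), ∀ c' ∈ att (φ i), c ≠ c' →
        L.page s(φ i, c) ≠ L.page s(φ i, c')) ∧
      (∀ i₁ i₂, i₁ < i₂ → i₂ < j → (φ i₁ ∈ att (φ i₂) ↔ G.Adj (x i₁) (x i₂))) ∧
      (∀ i, 1 ≤ i → i < j → att (φ i) = ((N i).image φ) ∪ B i) := by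
    intro j
    induction j with
    | zero => omega
    | succ j ih =>
      intro h1j hjn
      rcases Nat.eq_zero_or_pos j with hj0 | hjpos
      · -- base case : j + 1 = 1
        subst hj0
        refine ⟨fun _ => ⟨0, h0M⟩, rfl, ?_, ?_, ?_, ?_⟩
        · intro i hi
          have hi0 : i = 0 := by omega
          subst hi0
          exact (g6 ⟨0, h0M⟩).mpr (by simp)
        · intro i hi c hc c' hc' hne
          exfalso
          rw [g2 ⟨0, h0M⟩ (by simp)] at hc
          rw [Finset.mem_filter] at hc
          have : (c : ℕ) < 0 := hc.2
          omega
        · intro i₁ i₂ h12 h2; omega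
        · intro i hi1 hi2; omega
      · -- step case
        obtain ⟨φ, i0, ilev, igood, iC, iF⟩ := ih (by omega) (by omega)
        have hφinj : ∀ a bb, a < j → bb < j → φ a = φ bb → a = bb := by
          intro a bb ha hb heq
          have h1' := ilev a ha
          have h2' := ilev bb hb
          rw [heq] at h1'
          omega
        have hNsub : ∀ i ∈ N j, i < j := fun i hi => ((hN j i (by omega)).mp hi).1
        set S : Finset (Fin M) := (N j).image φ with hS
        set D : Finset (Fin M) := S ∪ B j with hD
        have hSlev : ∀ z ∈ S, ∃ i, i < j ∧ φ i = z ∧ lev z = i := by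
          intro z hz
          obtain ⟨i, hiN, rfl⟩ := Finset.mem_image.mp hz
          exact ⟨i, hNsub i hiN, rfl, ilev i (hNsub i hiN)⟩
        have hBlev : ∀ z ∈ B j, lev z = 0 := by
          intro z hz
          rw [hBmem] at hz
          exact (g6 z).mpr (by omega)
        have hdisj : Disjoint S (B j) := by
          rw [Finset.disjoint_left]
          intro z hzS hzB
          obtain ⟨i, hij, rfl, hlev⟩ := hSlev z hzS
          rw [hBmem] at hzB
          rcases Nat.eq_zero_or_pos i with h0 | h0
          · subst h0
            omega
          · have := hBlev _ (by rw [hBmem]; exact hzB)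
            omega
        have hScard : S.card = (N j).card := by
          rw [hS]
          apply Finset.card_image_of_injOn
          intro a ha bb hb heq
          exact hφinj a bb (hNsub a ha) (hNsub bb hb) heq
        have hNjcard : (N j).card = min j k := by
          rcases le_or_gt j k with hjk | hjk
          · have : N j = Finset.range j := by
              ext i
              rw [hN j i (by omega), Finset.mem_range]
              constructor
              · exact fun h => h.1
              · intro h
                exact ⟨h, hbase i j h (by omega) hjk⟩
            rw [this, Finset.card_range]
            omega
          · rw [hNcard j (by omega) hjk]
            omega
        have hDcard : D.card = k := by
          rw [hD, Finset.card_union_of_disjoint hdisj, hScard, hNjcard, hBcard]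
          omega
        have hDclique : ∀ a ∈ D, ∀ c ∈ D, a ≠ c → (a ∈ att c ∨ c ∈ att a) := by
          intro a ha c hc hac
          rw [hD, Finset.mem_union] at ha hc
          -- helper for the S-vs-B case
          have hSB : ∀ z w, z ∈ S → w ∈ B j → (z ∈ att w ∨ w ∈ att z) := by
            intro z w hzS hwB
            obtain ⟨i, hij, rfl, hlevz⟩ := hSlev z hzS
            rw [hBmem] at hwB
            rcases Nat.eq_zero_or_pos i with h0 | h0
            · subst h0
              left
              rw [g2 w (by omega)]
              rw [Finset.mem_filter]
              refine ⟨Finset.mem_univ _, ?_⟩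
              show (φ 0 : ℕ) < (w : ℕ)
              omega
            · right
              rw [iF i h0 hij, Finset.mem_union, hBmem]
              right
              omega
          rcases ha with haS | haB <;> rcases hc with hcS | hcB
          · -- both in S
            obtain ⟨i₁, h1j', hφ1, hlev1⟩ := hSlev a haS
            obtain ⟨i₂, h2j', hφ2, hlev2⟩ := hSlev c hcS
            obtain ⟨i₁', hi₁N, hφ1'⟩ := Finset.mem_image.mp haS
            obtain ⟨i₂', hi₂N, hφ2'⟩ := Finset.mem_image.mp hcS
            have e1 : i₁' = i₁ := hφinj _ _ (hNsub _ hi₁N) h1j' (by rw [hφ1', hφ1])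
            have e2 : i₂' = i₂ := hφinj _ _ (hNsub _ hi₂N) h2j' (by rw [hφ2', hφ2])
            rw [e1] at hi₁N
            rw [e2] at hi₂N
            have hne : i₁ ≠ i₂ := by
              intro hcon
              rw [hcon] at hφ1
              exact hac (by rw [← hφ1, ← hφ2])
            have hadj1 : G.Adj (x i₁) (x j) := ((hN j i₁ (by omega)).mp hi₁N).2
            have hadj2 : G.Adj (x i₂) (x j) := ((hN j i₂ (by omega)).mp hi₂N).2
            have hGadj := hclq j (by omega) i₁ i₂ h1j' h2j' hadj1 hadj2 hne
            rcases Nat.lt_or_ge i₁ i₂ with hlt | hge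
            · left
              rw [← hφ1, ← hφ2]
              exact (iC i₁ i₂ hlt h2j').mpr hGadj
            · right
              rw [← hφ1, ← hφ2]
              have hlt : i₂ < i₁ := by omega
              exact (iC i₂ i₁ hlt h1j').mpr hGadj.symm
          · exact hSB a c haS hcB
          · rcases hSB c a hcS haB with h | h
            · exact Or.inr h
            · exact Or.inl h
          · -- both in B j
            rw [hBmem] at haB hcB
            have hvne : (a:ℕ) ≠ (c:ℕ) := fun h => hac (Fin.ext h)
            rcases Nat.lt_or_ge (a:ℕ) (c:ℕ) with hlt | hge
            · left
              rw [g2 c (by omega), Finset.mem_filter]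
              exact ⟨Finset.mem_univ _, hlt⟩
            · right
              rw [g2 a (by omega), Finset.mem_filter]
              refine ⟨Finset.mem_univ _, ?_⟩
              show (c:ℕ) < (a:ℕ)
              omega
        have hDlev : ∀ a ∈ D, lev a ≤ j - 1 := by
          intro a ha
          rw [hD, Finset.mem_union] at ha
          rcases ha with h | h
          · obtain ⟨i, hij, rfl, hlev⟩ := hSlev a h
            omega
          · rw [hBlev a h]
            omega
        have hrich := g7 (j-1) (by omega) D hDcard hDclique hDlev
        have hj1 : j - 1 + 1 = j := by omega
        rw [hj1] at hrich
        set Cand : Finset (Fin M) :=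
          Finset.univ.filter (fun z : Fin M => lev z = j ∧ att z = D) with hCand
        have hCmem : ∀ z ∈ Cand, lev z = j ∧ att z = D := by
          intro z hz
          rw [hCand, Finset.mem_filter] at hz
          exact hz.2
        have hCadj : ∀ z ∈ Cand, ∀ d ∈ D, (gadgetGraph M att).Adj z d := by
          intro z hz d hd
          obtain ⟨hlz, haz⟩ := hCmem z hz
          have hld := hDlev d hd
          refine ⟨?_, Or.inr (by rw [haz]; exact hd)⟩
          intro hcon
          rw [hcon] at hlz
          omega
        have hCdisj : ∀ z ∈ Cand, z ∉ D := by
          intro z hz hzD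
          obtain ⟨hlz, -⟩ := hCmem z hz
          have := hDlev z hzD
          omega
        obtain ⟨y, hyC, hygood⟩ := exists_good L hbook hloc D hDcard Cand hrich hCadj hCdisj
        obtain ⟨hylev, hyatt⟩ := hCmem y hyC
        set φ' : ℕ → Fin M := fun i => if i = j then y else φ i with hφ'
        have hφ'old : ∀ i, i ≠ j → φ' i = φ i := by
          intro i hi
          show (if i = j then y else φ i) = φ i
          rw [if_neg hi]
        have hφ'new : φ' j = y := by
          show (if j = j then y else φ j) = y
          rw [if_pos rfl]
        have himage : (N j).image φ' = S := by
          rw [hS]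
          apply Finset.image_congr
          intro i hi
          exact hφ'old i (by have := hNsub i hi; omega)
        refine ⟨φ', ?_, ?_, ?_, ?_, ?_⟩
        · rw [hφ'old 0 (by omega)]
          exact i0
        · intro i hi
          rcases Nat.lt_or_ge i j with h | h
          · rw [hφ'old i (by omega)]
            exact ilev i h
          · have : i = j := by omega
            rw [this, hφ'new]
            exact hylev
        · intro i hi c hc c' hc' hne
          rcases Nat.lt_or_ge i j with h | h
          · rw [hφ'old i (by omega)] at hc hc' ⊢
            exact igood i h c hc c' hc' hne
          · have hij' : i = j := by omega
            rw [hij', hφ'new] at hc hc' ⊢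
            rw [hyatt] at hc hc'
            exact hygood c hc c' hc' hne
        · intro i₁ i₂ h12 h2
          rcases Nat.lt_or_ge i₂ j with h | h
          · rw [hφ'old i₁ (by omega), hφ'old i₂ (by omega)]
            exact iC i₁ i₂ h12 h
          · have hi2 : i₂ = j := by omega
            rw [hi2, hφ'new, hφ'old i₁ (by omega), hyatt]
            constructor
            · intro hmem
              rw [hD, Finset.mem_union] at hmem
              rcases hmem with hmem | hmem
              · obtain ⟨i', hi'N, hφ'⟩ := Finset.mem_image.mp hmem
                have : i' = i₁ := hφinj _ _ (hNsub _ hi'N) (by omega) hφ'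
                rw [this] at hi'N
                exact ((hN j i₁ (by omega)).mp hi'N).2
              · exfalso
                rw [hBmem] at hmem
                rcases Nat.eq_zero_or_pos i₁ with h0 | h0
                · rw [h0] at hmem
                  omega
                · have := ilev i₁ (by omega)
                  have := hBlev (φ i₁) (by rw [hBmem]; omega)
                  omega
            · intro hadj
              rw [hD, Finset.mem_union]
              left
              rw [hS]
              exact Finset.mem_image.mpr ⟨i₁, (hN j i₁ (by omega)).mpr ⟨by omega, hadj⟩, rfl⟩
        · intro i hi1 hi2
          rcases Nat.lt_or_ge i j with h | h
          · rw [hφ'old i (by omega)]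
            rw [iF i hi1 h]
            have himg2 : (N i).image φ' = (N i).image φ := by
              apply Finset.image_congr
              intro i' hi'
              have : i' < i := ((hN i i' (by omega)).mp hi').1
              exact hφ'old i' (by omega)
            rw [himg2]
          · have : i = j := by omega
            rw [this, hφ'new, hyatt, hD, himage]
  obtain ⟨φ, i0, ilev, igood, iC, iF⟩ := main n (by omega) (le_refl n)
  have hφinj : ∀ a bb, a < n → bb < n → φ a = φ bb → a = bb := by
    intro a bb ha hb heq
    have h1' := ilev a ha
    have h2' := ilev bb hb
    rw [heq] at h1'
    omega
  have hattφ0 : ∀ z, z ∈ att (φ 0) → False := by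
    intro z hz
    have h0k : ((φ 0 : Fin M) : ℕ) ≤ k := by omega
    rw [g2 (φ 0) h0k, Finset.mem_filter] at hz
    have : (z:ℕ) < ((φ 0 : Fin M) : ℕ) := hz.2
    omega
  have hAdjIff : ∀ i₁ i₂, i₁ < i₂ → i₂ < n →
      ((gadgetGraph M att).Adj (φ i₁) (φ i₂) ↔ G.Adj (x i₁) (x i₂)) := by
    intro i₁ i₂ h12 h2
    constructor
    · rintro ⟨hne, hor | hor⟩
      · exact (iC i₁ i₂ h12 h2).mp hor
      · exfalso
        rcases g5 (φ i₁) (φ i₂) hor with h | h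
        · have l1 := ilev i₁ (by omega)
          have l2 := ilev i₂ h2
          omega
        · have l1 := ilev i₁ (by omega)
          have hi10 : i₁ = 0 := by omega
          rw [hi10] at hor
          exact hattφ0 _ hor
    · intro h
      refine ⟨?_, Or.inl ((iC i₁ i₂ h12 h2).mpr h)⟩
      intro hcon
      have := hφinj i₁ i₂ (by omega) h2 hcon
      omega
  set X : Set (Fin M) := {z | ∃ i, i < n ∧ φ i = z} with hX
  have hxbij : Function.Bijective (fun i : Fin n => x i.val) := by
    constructor
    · intro a bb h
      exact Fin.ext (hinj a.val bb.val a.2 bb.2 h)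
    · intro a
      have ha : a ∈ Finset.univ := Finset.mem_univ a
      rw [himg] at ha
      obtain ⟨i, hi, hxi⟩ := Finset.mem_image.mp ha
      rw [Finset.mem_range] at hi
      exact ⟨⟨i, hi⟩, hxi⟩
  have hψbij : Function.Bijective
      (fun i : Fin n => (⟨φ i.val, ⟨i.val, i.2, rfl⟩⟩ : X)) := by
    constructor
    · intro a bb h
      have : φ a.val = φ bb.val := congrArg Subtype.val h
      exact Fin.ext (hφinj _ _ a.2 bb.2 this)
    · rintro ⟨z, i, hi, rfl⟩
      exact ⟨⟨i, hi⟩, rfl⟩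
  refine ⟨X, ?_, ?_⟩
  · -- the graph isomorphism
    refine ⟨(Equiv.ofBijective _ hxbij).symm.trans (Equiv.ofBijective _ hψbij), ?_⟩
    intro a bb
    have hxa : x ((Equiv.ofBijective _ hxbij).symm a).val = a :=
      Equiv.apply_symm_apply (Equiv.ofBijective _ hxbij) a
    have hxb : x ((Equiv.ofBijective _ hxbij).symm bb).val = bb :=
      Equiv.apply_symm_apply (Equiv.ofBijective _ hxbij) bb
    set i : Fin n := (Equiv.ofBijective _ hxbij).symm a with hia
    set i' : Fin n := (Equiv.ofBijective _ hxbij).symm bb with hib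
    show (gadgetGraph M att).Adj (φ i.val) (φ i'.val) ↔ G.Adj a bb
    rcases lt_trichotomy i.val i'.val with hlt | heq | hlt
    · rw [← hxa, ← hxb]
      exact hAdjIff i.val i'.val hlt i'.2
    · have hii : i = i' := Fin.ext heq
      have hab : a = bb := by rw [← hxa, ← hxb, hii]
      rw [hii]
      constructor
      · intro h
        exact absurd h ((gadgetGraph M att).loopless.irrefl _)
      · intro h
        rw [← hab] at h
        exact absurd h (G.loopless.irrefl a)
    · rw [← hxa, ← hxb]
      constructor
      · intro h
        exact ((hAdjIff i'.val i.val hlt i.2).mp h.symm).symm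
      · intro h
        exact ((hAdjIff i'.val i.val hlt i.2).mpr h.symm).symm
  · -- acyclicity
    intro p
    set H : SimpleGraph (Fin M) := SimpleGraph.fromEdgeSet
      {e | e ∈ (gadgetGraph M att).edgeSet ∧ L.page e = p ∧ ∀ w ∈ e, w ∈ X} with hH
    intro v c hcyc
    have hHadj : ∀ a bb : Fin M, H.Adj a bb →
        ((gadgetGraph M att).Adj a bb ∧ L.page s(a,bb) = p ∧ a ∈ X ∧ bb ∈ X) := by
      intro a bb h
      rw [hH, SimpleGraph.fromEdgeSet_adj] at h
      obtain ⟨⟨he, hp, hXmem⟩, hne⟩ := h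
      refine ⟨(SimpleGraph.mem_edgeSet (gadgetGraph M att)).mp he, hp, ?_, ?_⟩
      · exact hXmem a (Sym2.mem_mk_left a bb)
      · exact hXmem bb (Sym2.mem_mk_right a bb)
    -- pick the vertex of maximal level on the cycle
    have hsupne : c.support.toFinset.Nonempty :=
      ⟨v, by rw [List.mem_toFinset]; exact c.start_mem_support⟩
    obtain ⟨u, huT, hmax⟩ := Finset.exists_max_image c.support.toFinset lev hsupne
    rw [List.mem_toFinset] at huT
    have hmax' : ∀ z ∈ c.support, lev z ≤ lev u := by
      intro z hz
      exact hmax z (List.mem_toFinset.mpr hz)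
    set c' := c.rotate u huT with hc'def
    have hcyc' : c'.IsCycle := hcyc.rotate huT
    have hzsup : ∀ z, z ∈ c'.support → z ∈ c.support := by
      intro z hz
      rw [SimpleGraph.Walk.support_eq_cons c'] at hz
      rcases List.mem_cons.mp hz with rfl | hz
      · exact huT
      · have hperm := SimpleGraph.Walk.support_rotate c u huT
        have : z ∈ c.support.tail := (hperm.mem_iff).mp hz
        exact List.mem_of_mem_tail this
    have h3 := hcyc'.three_le_length
    have hnil : ¬ c'.Nil := by
      rw [SimpleGraph.Walk.nil_iff_length_eq]
      omega
    obtain ⟨w₁, hadj1, q, hq⟩ := SimpleGraph.Walk.not_nil_iff.mp hnil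
    have hnil2 : ¬ c'.reverse.Nil := by
      rw [SimpleGraph.Walk.nil_iff_length_eq, SimpleGraph.Walk.length_reverse]
      omega
    obtain ⟨w₂, hadj2, q₂, hq₂⟩ := SimpleGraph.Walk.not_nil_iff.mp hnil2
    have hed : c'.edges = s(u,w₁) :: q.edges := by
      rw [hq, SimpleGraph.Walk.edges_cons]
    have hrev : c'.edges.reverse = s(u,w₂) :: q₂.edges := by
      rw [← SimpleGraph.Walk.edges_reverse, hq₂, SimpleGraph.Walk.edges_cons]
    have hlenq : 2 ≤ q.edges.length := by
      have h1' : c'.length = q.length + 1 := by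
        rw [hq, SimpleGraph.Walk.length_cons]
      have h2' := SimpleGraph.Walk.length_edges q
      omega
    have hw12 : w₁ ≠ w₂ := by
      intro hww
      have hnd := hcyc'.edges_nodup
      rw [hed] at hnd
      have hnotmem := (List.nodup_cons.mp hnd).1
      apply hnotmem
      rw [hed, List.reverse_cons] at hrev
      rcases hqr : q.edges.reverse with _ | ⟨e0, rest⟩
      · exfalso
        have : q.edges = [] := by
          rw [← List.reverse_reverse q.edges, hqr]
          rfl
        rw [this] at hlenq
        simp at hlenq
      · rw [hqr] at hrev
        have he0 : e0 = s(u,w₂) := by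
          have := congrArg List.head? hrev
          simpa using this
        have hmem2 : s(u,w₂) ∈ q.edges := by
          rw [← List.mem_reverse, hqr, ← he0]
          exact List.mem_cons_self
        rwa [← hww] at hmem2
    have hw1sup : w₁ ∈ c'.support := by
      rw [hq, SimpleGraph.Walk.support_cons]
      exact List.mem_cons_of_mem _ q.start_mem_support
    have hw2sup : w₂ ∈ c'.support := by
      have hh : w₂ ∈ c'.reverse.support := by
        rw [hq₂, SimpleGraph.Walk.support_cons]
        exact List.mem_cons_of_mem _ q₂.start_mem_support
      rw [SimpleGraph.Walk.support_reverse] at hh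
      exact List.mem_reverse.mp hh
    obtain ⟨hGadj1, hp1, huX, hw1X⟩ := hHadj u w₁ hadj1
    obtain ⟨hGadj2, hp2, -, hw2X⟩ := hHadj u w₂ hadj2
    obtain ⟨iu, hiu, hφu⟩ := huX
    obtain ⟨i1, hi1, hφ1⟩ := hw1X
    obtain ⟨i2, hi2, hφ2⟩ := hw2X
    have liu := ilev iu hiu
    have li1 := ilev i1 hi1
    have li2 := ilev i2 hi2
    rw [hφu] at liu
    rw [hφ1] at li1
    rw [hφ2] at li2
    have hlev1 : lev w₁ ≤ lev u := hmax' w₁ (hzsup w₁ hw1sup)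
    have hlev2 : lev w₂ ≤ lev u := hmax' w₂ (hzsup w₂ hw2sup)
    have hne1 : w₁ ≠ u := fun h => (hGadj1.ne (h ▸ rfl)).elim
    have hne2 : w₂ ≠ u := fun h => (hGadj2.ne (h ▸ rfl)).elim
    have hi1u : i1 < iu := by
      rcases Nat.lt_or_ge i1 iu with h | h
      · exact h
      · exfalso
        have : i1 = iu := by omega
        rw [this] at hφ1
        exact hne1 (hφ1.symm ▸ hφu)
    have hi2u : i2 < iu := by
      rcases Nat.lt_or_ge i2 iu with h | h
      · exact h
      · exfalso
        have : i2 = iu := by omega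
        rw [this] at hφ2
        exact hne2 (hφ2.symm ▸ hφu)
    have hm1 : w₁ ∈ att u := by
      rcases hGadj1.2 with h | h
      · exfalso
        rcases g5 w₁ u h with hh | hh
        · omega
        · have hi10 : i1 = 0 := by omega
          rw [← hφ1, hi10] at h
          exact hattφ0 _ h
      · exact h
    have hm2 : w₂ ∈ att u := by
      rcases hGadj2.2 with h | h
      · exfalso
        rcases g5 w₂ u h with hh | hh
        · omega
        · have hi20 : i2 = 0 := by omega
          rw [← hφ2, hi20] at h
          exact hattφ0 _ h
      · exact h
    have := igood iu hiu w₁ (by rw [hφu]; exact hm1) w₂ (by rw [hφu]; exact hm2) hw12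
    rw [hφu] at this
    exact this (hp1.trans hp2.symm)
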